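/- For any real number λ, the vector field X = (0, (1/2)(Σᵢ κᵢ) u + λ v, (λ/2) x₁, …, (λ/2) x_n) on the Cahen-Wallach space (ℝ^{n+2}, g_cw) satisfies L_X g_cw + Ric = λ g_cw. Hence every Cahen-Wallach symmetric space is an expanding, steady, and shrinking Ricci soliton. -/

import Mathlib

noncomputable section

/-- A point of `ℝ^{n+2}`, written `(u, v, x)`. -/
abbrev Pt (n : ℕ) : Type := ℝ × ℝ × (Fin n → ℝ)

/-- The `k`-th coordinate direction in `ℝ^{n+2}` (`k = 0` is `∂_u`, `k = 1` is `∂_v`,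
`k = i + 2` is `∂_{x_i}`). -/
def cdir (n : ℕ) (k : Fin (n + 2)) : Pt n :=
  if (k : ℕ) = 0 then (1, 0, 0)
  else if (k : ℕ) = 1 then (0, 1, 0)
  else (0, 0, fun i => if (i : ℕ) + 2 = (k : ℕ) then 1 else 0)

/-- Partial derivative along the `k`-th coordinate direction. -/
def pd {n : ℕ} (k : Fin (n + 2)) (F : Pt n → ℝ) (p : Pt n) : ℝ :=
  fderiv ℝ F p (cdir n k)

/-- The `x`-coordinate of `p` associated to an index `k` with `2 ≤ k`. -/
def xc {n : ℕ} (p : Pt n) (k : Fin (n + 2)) : ℝ :=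
  if h : 2 ≤ (k : ℕ) then p.2.2 ⟨(k : ℕ) - 2, by have := k.isLt; omega⟩ else 0

/-- The value `κ_i` associated to an index `k = i + 2` with `2 ≤ k`. -/
def κc {n : ℕ} (κ : Fin n → ℝ) (k : Fin (n + 2)) : ℝ :=
  if h : 2 ≤ (k : ℕ) then κ ⟨(k : ℕ) - 2, by have := k.isLt; omega⟩ else 0

/-- The index of `ℝ^{n+2}` corresponding to the coordinate `x_i`. -/
def xi (n : ℕ) (i : Fin n) : Fin (n + 2) := ⟨(i : ℕ) + 2, by have := i.isLt; omega⟩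

/-- The Cahen-Wallach metric `g_cw = (Σᵢ κᵢ xᵢ²)(du)² + du dv + Σᵢ (dxᵢ)²` on `ℝ^{n+2}`. -/
def gCW {n : ℕ} (κ : Fin n → ℝ) (p : Pt n) (k l : Fin (n + 2)) : ℝ :=
  if (k : ℕ) = 0 ∧ (l : ℕ) = 0 then ∑ a, κ a * (p.2.2 a) ^ 2
  else if ((k : ℕ) = 0 ∧ (l : ℕ) = 1) ∨ ((k : ℕ) = 1 ∧ (l : ℕ) = 0) then 1
  else if k = l ∧ 2 ≤ (k : ℕ) then 1 else 0

/-- The inverse of the Cahen-Wallach metric. -/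
def gCWinv {n : ℕ} (κ : Fin n → ℝ) (p : Pt n) (k l : Fin (n + 2)) : ℝ :=
  if (k : ℕ) = 1 ∧ (l : ℕ) = 1 then -(∑ a, κ a * (p.2.2 a) ^ 2)
  else if ((k : ℕ) = 0 ∧ (l : ℕ) = 1) ∨ ((k : ℕ) = 1 ∧ (l : ℕ) = 0) then 1
  else if k = l ∧ 2 ≤ (k : ℕ) then 1 else 0

/-- Christoffel symbols `Γ^k_{ij}` of the Levi-Civita connection of `g_cw`. -/
def ΓCW {n : ℕ} (κ : Fin n → ℝ) (p : Pt n) (k i j : Fin (n + 2)) : ℝ :=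
  (1 / 2) * ∑ l, gCWinv κ p k l *
    (pd i (fun q => gCW κ q l j) p + pd j (fun q => gCW κ q l i) p
      - pd l (fun q => gCW κ q i j) p)

/-- Component `l` of `R(∂_i, ∂_j) ∂_k`, where `R(X,Y) = ∇_{[X,Y]} - [∇_X, ∇_Y]`. -/
def RCW {n : ℕ} (κ : Fin n → ℝ) (p : Pt n) (l i j k : Fin (n + 2)) : ℝ :=
  -(pd i (fun q => ΓCW κ q l j k) p - pd j (fun q => ΓCW κ q l i k) p
    + ∑ m, (ΓCW κ p l i m * ΓCW κ p m j k - ΓCW κ p l j m * ΓCW κ p m i k))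

/-- The `(0,4)`-curvature tensor `R(∂_i, ∂_j, ∂_k, ∂_l) = g(R(∂_i, ∂_j) ∂_k, ∂_l)`. -/
def R4CW {n : ℕ} (κ : Fin n → ℝ) (p : Pt n) (i j k l : Fin (n + 2)) : ℝ :=
  ∑ m, RCW κ p m i j k * gCW κ p m l

/-- Ricci tensor of `g_cw`: `Ric(X,Y) = trace (Z ↦ R(X,Z)Y)`. -/
def RicCW {n : ℕ} (κ : Fin n → ℝ) (p : Pt n) (i j : Fin (n + 2)) : ℝ :=
  ∑ k, RCW κ p k i k j

/-- Lie derivative of `g_cw` along a vector field with components `X`. -/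
def lieCW {n : ℕ} (κ : Fin n → ℝ) (X : Pt n → Fin (n + 2) → ℝ) (p : Pt n)
    (i j : Fin (n + 2)) : ℝ :=
  ∑ k, (X p k * pd k (fun q => gCW κ q i j) p
    + gCW κ p k j * pd i (fun q => X q k) p
    + gCW κ p i k * pd j (fun q => X q k) p)

/-- Hessian `Hess_h(∂_i, ∂_j)` with respect to the Levi-Civita connection of `g_cw`. -/
def hessCW {n : ℕ} (κ : Fin n → ℝ) (h : Pt n → ℝ) (p : Pt n) (i j : Fin (n + 2)) : ℝ :=
  pd i (fun q => pd j h q) p - ∑ k, ΓCW κ p k i j * pd k h p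

/-- Components of the gradient of `h` with respect to `g_cw`. -/
def gradCW {n : ℕ} (κ : Fin n → ℝ) (h : Pt n → ℝ) (p : Pt n) (k : Fin (n + 2)) : ℝ :=
  ∑ l, gCWinv κ p k l * pd l h p

/-- Component `k` of the covariant derivative `∇_{∂_i} X` for `g_cw`. -/
def covCW {n : ℕ} (κ : Fin n → ℝ) (X : Pt n → Fin (n + 2) → ℝ) (p : Pt n)
    (i k : Fin (n + 2)) : ℝ :=
  pd i (fun q => X q k) p + ∑ j, ΓCW κ p k i j * X p j

/-- The Ricci operator of `g_cw`, `g(QX, Y) = Ric(X, Y)`. -/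
def QCW {n : ℕ} (κ : Fin n → ℝ) (p : Pt n) (k i : Fin (n + 2)) : ℝ :=
  ∑ j, gCWinv κ p k j * RicCW κ p j i
section Helpers

open ContinuousLinearMap

variable {n : ℕ}

/-- coordinate CLMs -/
def Lu (n : ℕ) : Pt n →L[ℝ] ℝ := ContinuousLinearMap.fst ℝ ℝ (ℝ × (Fin n → ℝ))
def Lv (n : ℕ) : Pt n →L[ℝ] ℝ :=
  (ContinuousLinearMap.fst ℝ ℝ (Fin n → ℝ)).comp (ContinuousLinearMap.snd ℝ ℝ (ℝ × (Fin n → ℝ)))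
def Lx (n : ℕ) (a : Fin n) : Pt n →L[ℝ] ℝ :=
  (ContinuousLinearMap.proj a).comp
    ((ContinuousLinearMap.snd ℝ ℝ (Fin n → ℝ)).comp (ContinuousLinearMap.snd ℝ ℝ (ℝ × (Fin n → ℝ))))

@[simp] lemma Lu_apply (q : Pt n) : Lu n q = q.1 := rfl
@[simp] lemma Lv_apply (q : Pt n) : Lv n q = q.2.1 := rfl
@[simp] lemma Lx_apply (a : Fin n) (q : Pt n) : Lx n a q = q.2.2 a := rfl

lemma hasF_u (p : Pt n) : HasFDerivAt (fun q : Pt n => q.1) (Lu n) p := (Lu n).hasFDerivAt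
lemma hasF_v (p : Pt n) : HasFDerivAt (fun q : Pt n => q.2.1) (Lv n) p := (Lv n).hasFDerivAt
lemma hasF_x (a : Fin n) (p : Pt n) : HasFDerivAt (fun q : Pt n => q.2.2 a) (Lx n a) p :=
  (Lx n a).hasFDerivAt

lemma pd_eval {p : Pt n} {F : Pt n → ℝ} {L : Pt n →L[ℝ] ℝ} (h : HasFDerivAt F L p)
    (k : Fin (n + 2)) : pd k F p = L (cdir n k) := by rw [pd, h.fderiv]

@[simp] lemma cdir_of_ge (k : Fin (n + 2)) (hk : 2 ≤ (k : ℕ)) :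
    cdir n k = ((0 : ℝ), (0 : ℝ), fun i : Fin n => if (i : ℕ) + 2 = (k : ℕ) then (1 : ℝ) else 0) := by
  have h0 : ¬ (k : ℕ) = 0 := by omega
  have h1 : ¬ (k : ℕ) = 1 := by omega
  simp [cdir, h0, h1]

lemma Lu_cdir (k : Fin (n + 2)) : Lu n (cdir n k) = if (k : ℕ) = 0 then 1 else 0 := by
  by_cases h0 : (k : ℕ) = 0
  · simp [cdir, h0]
  · by_cases h1 : (k : ℕ) = 1 <;> simp [cdir, h0, h1]

lemma Lv_cdir (k : Fin (n + 2)) : Lv n (cdir n k) = if (k : ℕ) = 1 then 1 else 0 := by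
  by_cases h0 : (k : ℕ) = 0
  · simp [cdir, h0]
  · by_cases h1 : (k : ℕ) = 1 <;> simp [cdir, h0, h1]

lemma Lx_cdir (a : Fin n) (k : Fin (n + 2)) :
    Lx n a (cdir n k) = if (a : ℕ) + 2 = (k : ℕ) then 1 else 0 := by
  by_cases h0 : (k : ℕ) = 0
  · simp [cdir, h0]
  · by_cases h1 : (k : ℕ) = 1 <;> simp [cdir, h0, h1]

@[simp] lemma pd_const (k : Fin (n + 2)) (c : ℝ) (p : Pt n) : pd k (fun _ => c) p = 0 := by
  simp [pd]

lemma pd_cmul {F : Pt n → ℝ} {p : Pt n} (hF : DifferentiableAt ℝ F p) (c : ℝ)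
    (k : Fin (n + 2)) : pd k (fun q => c * F q) p = c * pd k F p := by
  simp [pd, fderiv_const_mul hF c]

/-- Kronecker-type delta used for derivatives of `xc`. -/
def dlt {n : ℕ} (m a : Fin (n + 2)) : ℝ := if m = a ∧ 2 ≤ (a : ℕ) then 1 else 0

lemma diff_xc (c : Fin (n + 2)) (p : Pt n) : DifferentiableAt ℝ (fun q : Pt n => xc q c) p := by
  by_cases hc : 2 ≤ (c : ℕ)
  · have : (fun q : Pt n => xc q c) =
        fun q : Pt n => q.2.2 ⟨(c : ℕ) - 2, by have := c.isLt; omega⟩ := by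
      funext q; simp [xc, hc]
    rw [this]; exact (hasF_x _ p).differentiableAt
  · have : (fun q : Pt n => xc q c) = fun _ : Pt n => (0 : ℝ) := by
      funext q; simp [xc, hc]
    rw [this]; exact differentiableAt_const 0

lemma pd_xc (m c : Fin (n + 2)) (p : Pt n) :
    pd m (fun q => xc q c) p = dlt m c := by
  by_cases hc : 2 ≤ (c : ℕ)
  · have he : (fun q : Pt n => xc q c) =
        fun q : Pt n => q.2.2 ⟨(c : ℕ) - 2, by have := c.isLt; omega⟩ := by
      funext q; simp [xc, hc]
    rw [he, pd_eval (hasF_x _ p), Lx_cdir, dlt]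
    have : (c : ℕ) - 2 + 2 = (c : ℕ) := by omega
    rw [this]
    by_cases hmc : m = c
    · simp [hmc, hc, Fin.ext_iff]
    · have : ¬ (m : ℕ) = (c : ℕ) := fun h => hmc (Fin.ext h)
      simp [hmc, Fin.ext_iff]; omega
  · have he : (fun q : Pt n => xc q c) = fun _ : Pt n => (0 : ℝ) := by
      funext q; simp [xc, hc]
    rw [he, pd_const, dlt]
    simp [hc]

lemma κc_of_lt {κ : Fin n → ℝ} {k : Fin (n + 2)} (h : (k : ℕ) < 2) : κc κ k = 0 := by
  simp [κc]; omega

lemma xc_of_lt {p : Pt n} {k : Fin (n + 2)} (h : (k : ℕ) < 2) : xc p k = 0 := by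
  simp [xc]; omega

@[simp] lemma κc_xi (κ : Fin n → ℝ) (a : Fin n) : κc κ (xi n a) = κ a := by
  simp [κc, xi]

@[simp] lemma xc_xi (p : Pt n) (a : Fin n) : xc p (xi n a) = p.2.2 a := by
  simp [xc, xi]

@[simp] lemma xi_val (a : Fin n) : ((xi n a : Fin (n + 2)) : ℕ) = (a : ℕ) + 2 := rfl

lemma sum_split (f : Fin (n + 2) → ℝ) :
    ∑ k, f k = f ⟨0, by omega⟩ + f ⟨1, by omega⟩ + ∑ a : Fin n, f (xi n a) := by
  rw [Fin.sum_univ_succ, Fin.sum_univ_succ, ← add_assoc]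
  rfl

end Helpers
section Helpers2

variable {n : ℕ}

lemma pd_sumsq (κ : Fin n → ℝ) (m : Fin (n + 2)) (p : Pt n) :
    pd m (fun q : Pt n => ∑ a, κ a * (q.2.2 a) ^ 2) p = 2 * κc κ m * xc p m := by
  have ha : ∀ a : Fin n, HasFDerivAt (fun q : Pt n => κ a * (q.2.2 a) ^ 2)
      ((2 * κ a * p.2.2 a) • Lx n a) p := by
    intro a
    have h1 := hasF_x a p
    have h2 := (h1.fun_mul h1).const_mul (κ a)
    have he : (fun q : Pt n => κ a * (q.2.2 a * q.2.2 a))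
        = fun q : Pt n => κ a * (q.2.2 a) ^ 2 := by
      funext q; ring
    rw [he] at h2
    refine h2.congr_fderiv ?_
    apply ContinuousLinearMap.ext
    intro d
    simp
    ring
  have hF := HasFDerivAt.fun_sum (fun a (_ : a ∈ Finset.univ) => ha a)
  rw [pd_eval hF m, ContinuousLinearMap.sum_apply]
  simp only [ContinuousLinearMap.smul_apply, Lx_cdir, smul_eq_mul]
  by_cases hm : 2 ≤ (m : ℕ)
  · rw [Finset.sum_eq_single (⟨(m : ℕ) - 2, by have := m.isLt; omega⟩ : Fin n)]
    · have hc : ((⟨(m : ℕ) - 2, by have := m.isLt; omega⟩ : Fin n) : ℕ) + 2 = (m : ℕ) := by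
        simp; omega
      rw [if_pos hc, κc, xc, dif_pos hm, dif_pos hm]
      ring
    · intro b _ hb
      have : ¬ ((b : ℕ) + 2 = (m : ℕ)) := by
        intro h; apply hb; apply Fin.ext; simp; omega
      rw [if_neg this, mul_zero]
    · intro h; exact absurd (Finset.mem_univ _) h
  · have h0 : ∀ b : Fin n, ¬ ((b : ℕ) + 2 = (m : ℕ)) := fun b h => hm (by omega)
    simp [h0, κc_of_lt (by omega : (m : ℕ) < 2)]

lemma pd_g (κ : Fin n → ℝ) (m i j : Fin (n + 2)) (p : Pt n) :
    pd m (fun q => gCW κ q i j) p =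
      if (i : ℕ) = 0 ∧ (j : ℕ) = 0 then 2 * κc κ m * xc p m else 0 := by
  by_cases h : (i : ℕ) = 0 ∧ (j : ℕ) = 0
  · have he : (fun q : Pt n => gCW κ q i j) = fun q : Pt n => ∑ a, κ a * (q.2.2 a) ^ 2 := by
      funext q; simp [gCW, h.1, h.2]
    rw [he, pd_sumsq, if_pos h]
  · have he : (fun q : Pt n => gCW κ q i j) = fun _ : Pt n =>
        (if ((i : ℕ) = 0 ∧ (j : ℕ) = 1) ∨ ((i : ℕ) = 1 ∧ (j : ℕ) = 0) then (1 : ℝ)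
         else if i = j ∧ 2 ≤ (i : ℕ) then 1 else 0) := by
      funext q; simp only [gCW, if_neg h]
    rw [he, pd_const, if_neg h]

lemma ginv_zero (κ : Fin n → ℝ) (p : Pt n) (k : Fin (n + 2)) :
    gCWinv κ p k ⟨0, by omega⟩ = if (k : ℕ) = 1 then 1 else 0 := by
  by_cases h : (k : ℕ) = 1 <;>
    [skip; skip] <;> (simp [gCWinv, h, Fin.ext_iff, -Fin.val_eq_zero_iff]; try omega)

lemma ginv_one (κ : Fin n → ℝ) (p : Pt n) (k : Fin (n + 2)) :
    gCWinv κ p k ⟨1, by omega⟩ =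
      if (k : ℕ) = 0 then 1
      else if (k : ℕ) = 1 then -(∑ a, κ a * (p.2.2 a) ^ 2) else 0 := by
  by_cases h0 : (k : ℕ) = 0
  · simp [gCWinv, h0, Fin.ext_iff]
    try omega
  · by_cases h1 : (k : ℕ) = 1 <;> (simp [gCWinv, h0, h1, Fin.ext_iff]; try omega)

lemma ginv_xi (κ : Fin n → ℝ) (p : Pt n) (k : Fin (n + 2)) (a : Fin n) :
    gCWinv κ p k (xi n a) = if k = xi n a then 1 else 0 := by
  by_cases h : k = xi n a
  · subst h; simp [gCWinv, Fin.ext_iff]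
    try omega
  · simp [gCWinv, h, Fin.ext_iff, -Fin.val_eq_zero_iff]
    try omega

end Helpers2
section Helpers3

variable {n : ℕ}

lemma Gamma_eq (κ : Fin n → ℝ) (p : Pt n) (k i j : Fin (n + 2)) :
    ΓCW κ p k i j =
      (if (k : ℕ) = 1 ∧ (j : ℕ) = 0 then κc κ i else 0) * xc p i
      + (if (k : ℕ) = 1 ∧ (i : ℕ) = 0 then κc κ j else 0) * xc p j
      - (if (i : ℕ) = 0 ∧ (j : ℕ) = 0 then κc κ k else 0) * xc p k := by
  rw [ΓCW, sum_split]
  simp only [pd_g, ginv_zero, ginv_one, ginv_xi]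
  have hκ0 : κc κ (⟨0, by omega⟩ : Fin (n + 2)) = 0 := κc_of_lt (by simp)
  have hκ1 : κc κ (⟨1, by omega⟩ : Fin (n + 2)) = 0 := κc_of_lt (by simp)
  have hsum : ∑ a : Fin n, (if k = xi n a then (1:ℝ) else 0) *
      ((if ((xi n a : Fin (n+2)) : ℕ) = 0 ∧ (j : ℕ) = 0 then 2 * κc κ i * xc p i else 0)
        + (if ((xi n a : Fin (n+2)) : ℕ) = 0 ∧ (i : ℕ) = 0 then 2 * κc κ j * xc p j else 0)
        - (if (i : ℕ) = 0 ∧ (j : ℕ) = 0 then 2 * κc κ (xi n a) * xc p (xi n a) else 0))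
      = - (if (i : ℕ) = 0 ∧ (j : ℕ) = 0 then (2 * κc κ k * xc p k) else 0) := by
    by_cases hk : 2 ≤ (k : ℕ)
    · rw [Finset.sum_eq_single (⟨(k : ℕ) - 2, by have := k.isLt; omega⟩ : Fin n)]
      · have hke : k = xi n (⟨(k : ℕ) - 2, by have := k.isLt; omega⟩ : Fin n) := by
          apply Fin.ext; simp; omega
        rw [if_pos hke, ← hke]
        have h2 : ¬ ((k : ℕ) = 0 ∧ (j : ℕ) = 0) := by omega
        have h3 : ¬ ((k : ℕ) = 0 ∧ (i : ℕ) = 0) := by omega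
        rw [if_neg h2, if_neg h3]
        by_cases hij : (i : ℕ) = 0 ∧ (j : ℕ) = 0 <;> simp [hij]
      · intro b _ hb
        have : ¬ k = xi n b := by
          intro h; apply hb; apply Fin.ext
          have hh := congrArg Fin.val h
          simp at hh; simp; omega
        rw [if_neg this, zero_mul]
      · intro h; exact absurd (Finset.mem_univ _) h
    · have hknot : ∀ a : Fin n, ¬ k = xi n a := by
        intro a h
        rw [Fin.ext_iff] at h
        simp at h; omega
      have hκk : κc κ k = 0 := κc_of_lt (by omega)
      simp [hknot, hκk]
  rw [hsum]
  have hκ1' : κc κ (1 : Fin (n + 2)) = 0 := κc_of_lt (by simp)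
  have hκ0' : κc κ (0 : Fin (n + 2)) = 0 := κc_of_lt (by simp)
  have hx1' : xc p (1 : Fin (n + 2)) = 0 := xc_of_lt (by simp)
  have hx0' : xc p (0 : Fin (n + 2)) = 0 := xc_of_lt (by simp)
  -- now a closed computation with the l = 0 and l = 1 terms
  by_cases hk1 : (k : ℕ) = 1
  · have hk0 : ¬ (k : ℕ) = 0 := by omega
    have hκk : κc κ k = 0 := κc_of_lt (by omega)
    by_cases hi : (i : ℕ) = 0 <;> by_cases hj : (j : ℕ) = 0 <;>
      simp [hk0, hk1, hi, hj, hκ0, hκ1, hκk, hκ1', hκ0', hx1', hx0'] <;> ring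
  · by_cases hk0 : (k : ℕ) = 0
    · have hκk : κc κ k = 0 := κc_of_lt (by omega)
      by_cases hi : (i : ℕ) = 0 <;> by_cases hj : (j : ℕ) = 0 <;>
        simp [hk0, hk1, hi, hj, hκ0, hκ1, hκk, hκ1', hκ0', hx1', hx0'] <;> ring
    · by_cases hi : (i : ℕ) = 0 <;> by_cases hj : (j : ℕ) = 0 <;>
        simp [hk0, hk1, hi, hj, hκ0, hκ1, hκ1', hκ0', hx1', hx0'] <;> ring

end Helpers3
section Helpers4

variable {n : ℕ}

lemma pd_add' {F G : Pt n → ℝ} {p : Pt n} (hF : DifferentiableAt ℝ F p)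
    (hG : DifferentiableAt ℝ G p) (k : Fin (n + 2)) :
    pd k (fun q => F q + G q) p = pd k F p + pd k G p := by
  simp [pd, fderiv_fun_add hF hG]

lemma pd_sub' {F G : Pt n → ℝ} {p : Pt n} (hF : DifferentiableAt ℝ F p)
    (hG : DifferentiableAt ℝ G p) (k : Fin (n + 2)) :
    pd k (fun q => F q - G q) p = pd k F p - pd k G p := by
  simp [pd, fderiv_fun_sub hF hG]

lemma pd_lin (c1 c2 c3 : ℝ) (a b c m : Fin (n + 2)) (p : Pt n) :
    pd m (fun q => c1 * xc q a + c2 * xc q b - c3 * xc q c) p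
      = c1 * dlt m a + c2 * dlt m b - c3 * dlt m c := by
  have d1 : DifferentiableAt ℝ (fun q : Pt n => c1 * xc q a) p :=
    (diff_xc a p).const_mul c1
  have d2 : DifferentiableAt ℝ (fun q : Pt n => c2 * xc q b) p :=
    (diff_xc b p).const_mul c2
  have d3 : DifferentiableAt ℝ (fun q : Pt n => c3 * xc q c) p :=
    (diff_xc c p).const_mul c3
  rw [pd_sub' (d1.fun_add d2) d3, pd_add' d1 d2,
    pd_cmul (diff_xc a p), pd_cmul (diff_xc b p), pd_cmul (diff_xc c p),
    pd_xc, pd_xc, pd_xc]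

lemma pd_Gamma (κ : Fin n → ℝ) (m k i j : Fin (n + 2)) (p : Pt n) :
    pd m (fun q => ΓCW κ q k i j) p =
      (if (k : ℕ) = 1 ∧ (j : ℕ) = 0 then κc κ i else 0) * dlt m i
      + (if (k : ℕ) = 1 ∧ (i : ℕ) = 0 then κc κ j else 0) * dlt m j
      - (if (i : ℕ) = 0 ∧ (j : ℕ) = 0 then κc κ k else 0) * dlt m k := by
  have he : (fun q : Pt n => ΓCW κ q k i j) = fun q : Pt n =>
      (if (k : ℕ) = 1 ∧ (j : ℕ) = 0 then κc κ i else 0) * xc q i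
      + (if (k : ℕ) = 1 ∧ (i : ℕ) = 0 then κc κ j else 0) * xc q j
      - (if (i : ℕ) = 0 ∧ (j : ℕ) = 0 then κc κ k else 0) * xc q k := by
    funext q; exact Gamma_eq κ q k i j
  rw [he, pd_lin]

/-- `Γ^k_{km} = 0`. -/
lemma Gamma_kk (κ : Fin n → ℝ) (p : Pt n) (k m : Fin (n + 2)) :
    ΓCW κ p k k m = 0 := by
  rw [Gamma_eq]
  by_cases hk : (k : ℕ) = 1
  · have : κc κ k = 0 := κc_of_lt (by omega)
    simp [hk, this]
  · have h2 : ¬ ((k : ℕ) = 1 ∧ (m : ℕ) = 0) := fun h => hk h.1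
    have h3 : ¬ ((k : ℕ) = 1 ∧ (k : ℕ) = 0) := fun h => hk h.1
    by_cases hk0 : (k : ℕ) = 0
    · have : κc κ k = 0 := κc_of_lt (by omega)
      simp [h2, h3, hk0, this]
    · have h4 : ¬ ((k : ℕ) = 0 ∧ (m : ℕ) = 0) := fun h => hk0 h.1
      simp [h2, h3, h4, -Fin.val_eq_zero_iff]

/-- `Γ^k_{im} Γ^m_{kj} = 0`. -/
lemma Gamma_prod (κ : Fin n → ℝ) (p : Pt n) (k i m j : Fin (n + 2)) :
    ΓCW κ p k i m * ΓCW κ p m k j = 0 := by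
  rw [Gamma_eq, Gamma_eq]
  by_cases hm : (m : ℕ) = 1
  · have hκm : κc κ m = 0 := κc_of_lt (by omega)
    have hxm : xc p m = 0 := xc_of_lt (by omega)
    have h1 : ¬ ((i : ℕ) = 0 ∧ (m : ℕ) = 0) := by omega
    simp [hm, h1, hκm, hxm]
  · by_cases hk0 : (k : ℕ) = 0
    · have hκk : κc κ k = 0 := κc_of_lt (by omega)
      have hxk : xc p k = 0 := xc_of_lt (by omega)
      have h1 : ¬ ((k : ℕ) = 1 ∧ (m : ℕ) = 0) := by omega
      have h2 : ¬ ((k : ℕ) = 1 ∧ (i : ℕ) = 0) := by omega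
      simp [h1, h2, hκk, hxk, -Fin.val_eq_zero_iff]
    · have h1 : ¬ ((m : ℕ) = 1 ∧ (j : ℕ) = 0) := by omega
      have h2 : ¬ ((m : ℕ) = 1 ∧ (k : ℕ) = 0) := by omega
      have h3 : ¬ ((k : ℕ) = 0 ∧ (j : ℕ) = 0) := by omega
      simp [h1, h2, h3, -Fin.val_eq_zero_iff]

end Helpers4
section Helpers5

variable {n : ℕ}

lemma Ric_eq (κ : Fin n → ℝ) (p : Pt n) (i j : Fin (n + 2)) :
    RicCW κ p i j = if (i : ℕ) = 0 ∧ (j : ℕ) = 0 then -(∑ a, κ a) else 0 := by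
  rw [RicCW]
  have hsummand : ∀ k : Fin (n + 2), RCW κ p k i k j =
      -(if (i : ℕ) = 0 ∧ (j : ℕ) = 0 then κc κ k else 0) := by
    intro k
    rw [RCW]
    have hz : ∑ m, (ΓCW κ p k i m * ΓCW κ p m k j - ΓCW κ p k k m * ΓCW κ p m i j) = 0 := by
      apply Finset.sum_eq_zero; intro m _
      rw [Gamma_prod, Gamma_kk, zero_mul, sub_zero]
    rw [hz, pd_Gamma, pd_Gamma]
    have t1 : (if (k : ℕ) = 1 ∧ (j : ℕ) = 0 then κc κ k else 0) = 0 := by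
      split_ifs with h
      · exact κc_of_lt (by omega)
      · rfl
    have t2 : ¬ ((k : ℕ) = 1 ∧ (k : ℕ) = 0) := by omega
    have t3 : (if (k : ℕ) = 0 ∧ (j : ℕ) = 0 then κc κ k else 0) = 0 := by
      split_ifs with h
      · exact κc_of_lt (by omega)
      · rfl
    have t4 : (if (k : ℕ) = 1 ∧ (j : ℕ) = 0 then κc κ i else 0) * dlt k i = 0 := by
      by_cases h : (k : ℕ) = 1 ∧ (j : ℕ) = 0
      · have : dlt k i = 0 := by
          simp only [dlt, ite_eq_right_iff]
          intro hc
          exfalso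
          have := hc.1
          rw [Fin.ext_iff] at this
          omega
        rw [this, mul_zero]
      · rw [if_neg h, zero_mul]
    have t5 : (if (k : ℕ) = 1 ∧ (i : ℕ) = 0 then κc κ j else 0) * dlt k j = 0 := by
      by_cases h : (k : ℕ) = 1 ∧ (i : ℕ) = 0
      · have : dlt k j = 0 := by
          simp only [dlt, ite_eq_right_iff]
          intro hc
          exfalso
          have := hc.1
          rw [Fin.ext_iff] at this
          omega
        rw [this, mul_zero]
      · rw [if_neg h, zero_mul]
    have t6 : (if (i : ℕ) = 0 ∧ (j : ℕ) = 0 then κc κ k else 0) * dlt k k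
        = (if (i : ℕ) = 0 ∧ (j : ℕ) = 0 then κc κ k else 0) := by
      by_cases hk : 2 ≤ (k : ℕ)
      · have : dlt k k = 1 := by simp [dlt, hk]
        rw [this, mul_one]
      · have hκk : κc κ k = 0 := κc_of_lt (by omega)
        simp [hκk]
    rw [t1, t3, if_neg t2, t4, t5, t6]
    ring
  simp only [hsummand]
  by_cases hP : (i : ℕ) = 0 ∧ (j : ℕ) = 0
  · simp only [if_pos hP]
    rw [sum_split (fun k => -κc κ k)]
    have h0 : κc κ (⟨0, by omega⟩ : Fin (n + 2)) = 0 := κc_of_lt (by simp)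
    have h1 : κc κ (⟨1, by omega⟩ : Fin (n + 2)) = 0 := κc_of_lt (by simp)
    have h0' : κc κ (0 : Fin (n + 2)) = 0 := κc_of_lt (by simp)
    have h1' : κc κ (1 : Fin (n + 2)) = 0 := κc_of_lt (by simp)
    simp [h0, h1, h0', h1']
  · simp [hP, -Fin.val_eq_zero_iff]

end Helpers5
section Helpers6

variable {n : ℕ}

lemma pd_X (κ : Fin n → ℝ) (lam : ℝ) (m k : Fin (n + 2)) (p : Pt n) :
    pd m (fun q : Pt n =>
        if (k : ℕ) = 0 then 0
        else if (k : ℕ) = 1 then (1 / 2) * (∑ a, κ a) * q.1 + lam * q.2.1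
        else lam / 2 * xc q k) p =
      if (k : ℕ) = 0 then 0
      else if (k : ℕ) = 1 then
        (if (m : ℕ) = 0 then (1 / 2) * (∑ a, κ a) else 0)
          + (if (m : ℕ) = 1 then lam else 0)
      else lam / 2 * dlt m k := by
  by_cases hk0 : (k : ℕ) = 0
  · have he : (fun q : Pt n =>
        if (k : ℕ) = 0 then (0 : ℝ)
        else if (k : ℕ) = 1 then (1 / 2) * (∑ a, κ a) * q.1 + lam * q.2.1
        else lam / 2 * xc q k) = fun _ : Pt n => (0 : ℝ) := by
      funext q; simp [hk0]
    rw [he, pd_const, if_pos hk0]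
  · by_cases hk1 : (k : ℕ) = 1
    · have he : (fun q : Pt n =>
          if (k : ℕ) = 0 then (0 : ℝ)
          else if (k : ℕ) = 1 then (1 / 2) * (∑ a, κ a) * q.1 + lam * q.2.1
          else lam / 2 * xc q k)
          = fun q : Pt n => (1 / 2) * (∑ a, κ a) * q.1 + lam * q.2.1 := by
        funext q; simp [hk0, hk1]
      rw [he, if_neg hk0, if_pos hk1]
      have h1 := (hasF_u (n := n) p).const_mul ((1 / 2) * (∑ a, κ a))
      have h2 := (hasF_v (n := n) p).const_mul lam
      have hF := h1.fun_add h2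
      rw [pd_eval hF m]
      simp only [ContinuousLinearMap.add_apply, ContinuousLinearMap.smul_apply,
        Lu_cdir, Lv_cdir, smul_eq_mul, mul_ite, mul_one, mul_zero]
    · have he : (fun q : Pt n =>
          if (k : ℕ) = 0 then (0 : ℝ)
          else if (k : ℕ) = 1 then (1 / 2) * (∑ a, κ a) * q.1 + lam * q.2.1
          else lam / 2 * xc q k)
          = fun q : Pt n => lam / 2 * xc q k := by
        funext q; simp [hk0, hk1]
      rw [he, pd_cmul (diff_xc k p), pd_xc, if_neg hk0, if_neg hk1]

lemma g_symm (κ : Fin n → ℝ) (p : Pt n) (k l : Fin (n + 2)) :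
    gCW κ p k l = gCW κ p l k := by
  by_cases h : k = l
  · rw [h]
  · have h' : ¬ l = k := fun hh => h hh.symm
    have hv : ¬ (k : ℕ) = (l : ℕ) := fun hh => h (Fin.ext hh)
    rw [gCW, gCW]
    by_cases hk0 : (k : ℕ) = 0 <;> by_cases hl0 : (l : ℕ) = 0 <;>
      simp [hk0, hl0, h, h', hv] <;> omega

lemma g_zero (κ : Fin n → ℝ) (p : Pt n) (l : Fin (n + 2)) :
    gCW κ p ⟨0, by omega⟩ l =
      if (l : ℕ) = 0 then (∑ a, κ a * (p.2.2 a) ^ 2)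
      else if (l : ℕ) = 1 then 1 else 0 := by
  by_cases hl0 : (l : ℕ) = 0
  · simp [gCW, hl0]
  · by_cases hl1 : (l : ℕ) = 1 <;> simp [gCW, hl0, hl1]

lemma g_one (κ : Fin n → ℝ) (p : Pt n) (l : Fin (n + 2)) :
    gCW κ p ⟨1, by omega⟩ l = if (l : ℕ) = 0 then 1 else 0 := by
  by_cases hl0 : (l : ℕ) = 0 <;> simp [gCW, hl0, Fin.ext_iff] <;> omega

lemma g_xi (κ : Fin n → ℝ) (p : Pt n) (a : Fin n) (l : Fin (n + 2)) :
    gCW κ p (xi n a) l = if l = xi n a then 1 else 0 := by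
  by_cases h : l = xi n a
  · subst h; simp [gCW, Fin.ext_iff]
    try omega
  · have hv : ¬ (xi n a : Fin (n + 2)) = l := fun hh => h hh.symm
    simp [gCW, h, hv, Fin.ext_iff, -Fin.val_eq_zero_iff]
    try omega

end Helpers6
section Helpers7

variable {n : ℕ}

lemma dlt_xi (m : Fin (n + 2)) (a : Fin n) :
    dlt m (xi n a) = if m = xi n a then 1 else 0 := by
  simp [dlt]

lemma dlt_of_lt {m c : Fin (n + 2)} (h : (c : ℕ) < 2) : dlt m c = 0 := by
  simp [dlt]; omega

lemma pd_coord (c : ℝ) (a : Fin n) (m : Fin (n + 2)) (p : Pt n) :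
    pd m (fun q : Pt n => c * q.2.2 a) p = c * (if m = xi n a then 1 else 0) := by
  rw [pd_cmul ((hasF_x a p).differentiableAt), pd_eval (hasF_x a p), Lx_cdir]
  congr 1
  by_cases h : m = xi n a
  · rw [if_pos h, if_pos]
    rw [h]; simp
  · rw [if_neg _, if_neg h]
    intro hh; apply h; apply Fin.ext; simp; omega

lemma pd_lin_uv (c d : ℝ) (m : Fin (n + 2)) (p : Pt n) :
    pd m (fun q : Pt n => c * q.1 + d * q.2.1) p
      = (if (m : ℕ) = 0 then c else 0) + (if (m : ℕ) = 1 then d else 0) := by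
  have h1 := (hasF_u (n := n) p).const_mul c
  have h2 := (hasF_v (n := n) p).const_mul d
  rw [pd_eval (h1.fun_add h2) m]
  simp only [ContinuousLinearMap.add_apply, ContinuousLinearMap.smul_apply,
    Lu_cdir, Lv_cdir, smul_eq_mul, mul_ite, mul_one, mul_zero]

end Helpers7

/-- for any `λ ∈ ℝ`, the vector field
`X = (0, (1/2)(Σᵢ κᵢ) u + λ v, (λ/2) x₁, …, (λ/2) x_n)` satisfies
`L_X g_cw + Ric = λ g_cw`; hence every Cahen-Wallach symmetric space is an expanding,
steady and shrinking Ricci soliton. -/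
theorem cw_soliton {n : ℕ} (κ : Fin n → ℝ) (hκ : ∀ i, κ i ≠ 0) (lam : ℝ) :
    ∀ (p : Pt n) (i j : Fin (n + 2)),
      lieCW κ (fun q k =>
          if (k : ℕ) = 0 then 0
          else if (k : ℕ) = 1 then (1 / 2) * (∑ a, κ a) * q.1 + lam * q.2.1
          else lam / 2 * xc q k) p i j
        + RicCW κ p i j = lam * gCW κ p i j := by
  intro p i j
  rw [lieCW, Ric_eq, sum_split]
  have g_zero' : ∀ l : Fin (n + 2), gCW κ p l ⟨0, by omega⟩ =
      if (l : ℕ) = 0 then (∑ a, κ a * (p.2.2 a) ^ 2)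
      else if (l : ℕ) = 1 then 1 else 0 :=
    fun l => (g_symm κ p l _).trans (g_zero κ p l)
  have g_one' : ∀ l : Fin (n + 2), gCW κ p l ⟨1, by omega⟩ =
      if (l : ℕ) = 0 then 1 else 0 :=
    fun l => (g_symm κ p l _).trans (g_one κ p l)
  have g_xi' : ∀ (a : Fin n) (l : Fin (n + 2)), gCW κ p l (xi n a) =
      if l = xi n a then 1 else 0 :=
    fun a l => (g_symm κ p l _).trans (g_xi κ p a l)
  have hκ0 : κc κ (⟨0, by omega⟩ : Fin (n + 2)) = 0 := κc_of_lt (by simp)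
  have hκ1 : κc κ (⟨1, by omega⟩ : Fin (n + 2)) = 0 := κc_of_lt (by simp)
  simp only [pd_g, pd_X, g_zero, g_one, g_xi, g_zero', g_one', g_xi', dlt_xi,
    κc_xi, xc_xi, hκ0, hκ1]
  by_cases hi0 : (i : ℕ) = 0
  · by_cases hj0 : (j : ℕ) = 0
    · -- (0,0)
      have hix : ∀ a : Fin n, ¬ i = xi n a := by
        intro a h; rw [Fin.ext_iff] at h; simp at h; omega
      have hjx : ∀ a : Fin n, ¬ j = xi n a := by
        intro a h; rw [Fin.ext_iff] at h; simp at h; omega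
      simp only [hi0, hj0, hix, hjx]
      simp [gCW, hi0, hj0, hix, hjx, pd_lin_uv, pd_coord]
      have e1 : ∑ x : Fin n, lam / 2 * p.2.2 x * (2 * κ x * p.2.2 x)
          = lam * ∑ a : Fin n, κ a * (p.2.2 a) ^ 2 := by
        rw [Finset.mul_sum]; apply Finset.sum_congr rfl; intros; ring
      have e2 : (∑ i₀ : Fin n, 2⁻¹ * κ i₀) + (∑ i₀ : Fin n, 2⁻¹ * κ i₀)
          = ∑ a : Fin n, κ a := by
        rw [← Finset.sum_add_distrib]; apply Finset.sum_congr rfl; intros; ring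
      linarith [e1, e2]
    · -- i = 0, j ≠ 0
      have hix : ∀ a : Fin n, ¬ i = xi n a := by
        intro a h; rw [Fin.ext_iff] at h; simp at h; omega
      have hij : ¬ i = j := by
        intro h; rw [Fin.ext_iff] at h; omega
      by_cases hj1 : (j : ℕ) = 1
      · simp [gCW, hi0, hj0, hj1, hix, hij, pd_lin_uv, pd_coord]
      · simp [gCW, hi0, hj0, hj1, hix, hij, pd_lin_uv, pd_coord]
  · -- i ≠ 0
    by_cases hi1 : (i : ℕ) = 1
    · have hix : ∀ a : Fin n, ¬ i = xi n a := by
        intro a h; rw [Fin.ext_iff] at h; simp at h; omega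
      by_cases hj0 : (j : ℕ) = 0
      · have hij : ¬ i = j := by intro h; rw [Fin.ext_iff] at h; omega
        simp [gCW, hi0, hi1, hj0, hix, hij, pd_lin_uv, pd_coord]
      · by_cases hj1 : (j : ℕ) = 1
        · have hij : i = j := by apply Fin.ext; omega
          have hjx : ∀ a : Fin n, ¬ j = xi n a := by
            intro a h; rw [Fin.ext_iff] at h; simp at h; omega
          simp [gCW, hi0, hi1, hj0, hj1, hix, hjx, hij, pd_lin_uv, pd_coord]
        · have hij : ¬ i = j := by intro h; rw [Fin.ext_iff] at h; omega
          simp [gCW, hi0, hi1, hj0, hj1, hix, hij, pd_lin_uv, pd_coord]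
    · -- 2 ≤ i
      have hi2 : 2 ≤ (i : ℕ) := by omega
      by_cases hj0 : (j : ℕ) = 0
      · have hjx : ∀ a : Fin n, ¬ j = xi n a := by
          intro a h; rw [Fin.ext_iff] at h; simp at h; omega
        have hij : ¬ i = j := by intro h; rw [Fin.ext_iff] at h; omega
        simp [gCW, hi0, hi1, hj0, hjx, hij, pd_lin_uv, pd_coord]
      · by_cases hj1 : (j : ℕ) = 1
        · have hjx : ∀ a : Fin n, ¬ j = xi n a := by
            intro a h; rw [Fin.ext_iff] at h; simp at h; omega
          have hij : ¬ i = j := by intro h; rw [Fin.ext_iff] at h; omega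
          simp [gCW, hi0, hi1, hj0, hj1, hjx, hij, pd_lin_uv, pd_coord]
        · -- 2 ≤ i, 2 ≤ j
          have hj2 : 2 ≤ (j : ℕ) := by omega
          by_cases hij : i = j
          · subst hij
            simp [gCW, hi0, hi1, hj0, hj1, hi2, pd_lin_uv, pd_coord]
            rw [Finset.sum_eq_single (⟨(i : ℕ) - 2, by have := i.isLt; omega⟩ : Fin n)]
            · have hie : i = xi n (⟨(i : ℕ) - 2, by have := i.isLt; omega⟩ : Fin n) := by
                apply Fin.ext; simp; omega
              simp only [if_pos hie]
              try ring
              try (rw [← hie]; simp; ring)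
            · intro b _ hb
              have : ¬ i = xi n b := by
                intro h; apply hb; apply Fin.ext
                have hh := congrArg Fin.val h; simp at hh; simp; omega
              simp [this]
            · intro h; exact absurd (Finset.mem_univ _) h
          · simp [gCW, hi0, hi1, hj0, hj1, hij, pd_lin_uv, pd_coord]
            apply Finset.sum_eq_zero
            intro a _
            by_cases hja : j = xi n a
            · have : ¬ i = xi n a := fun h => hij (h.trans hja.symm)
              simp [hja, this]
            · simp [hja]
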